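/- Let S, I₂ be nonnegative real random variables (possibly dependent on each other), with S integrable, and let I₁ be a nonnegative real random variable independent of the pair (S, I₂). Let c > 0 be a constant. Then E[ln(1 + S/(I₁ + I₂ + c))] = ∫_0^∞ (e^{−sc}/s) · E[e^{−s I₁}] · ( E[e^{−s I₂}] − E[e^{−s(I₂ + S)}] ) ds. -/

import Mathlib

open MeasureTheory ProbabilityTheory

lemma exp_integral_Ioc {s : ℝ} (hs : 0 < s) {a b : ℝ} (hab : a ≤ b) :
    ∫ t in Set.Ioc a b, Real.exp (-(s * t)) = (Real.exp (-(s * a)) - Real.exp (-(s * b))) / s := by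
  rw [← intervalIntegral.integral_of_le hab]
  have : ∀ t : ℝ, Real.exp (-(s * t)) = (fun u => Real.exp (-u)) (s * t) := fun t => rfl
  rw [intervalIntegral.integral_comp_mul_left (fun u => Real.exp (-u)) hs.ne']
  rw [intervalIntegral.integral_comp_neg (fun u => Real.exp u)]
  rw [integral_exp]
  rw [smul_eq_mul]
  ring

lemma frullani_pointwise {t : ℝ} (ht : 0 < t) :
    ∫ s in Set.Ioi (0:ℝ), Real.exp (-(s * t)) = t⁻¹ := by
  have := MeasureTheory.integral_comp_mul_left_Ioi (fun u => Real.exp (-u)) 0 ht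
  simp only [mul_zero, smul_eq_mul] at this
  rw [integral_exp_neg_Ioi_zero, mul_one] at this
  simp_rw [mul_comm t _] at this
  exact this

lemma frullani_log {a d : ℝ} (ha : 0 < a) (hd : 0 ≤ d) :
    ∫ s in Set.Ioi (0:ℝ), (Real.exp (-(s * a)) - Real.exp (-(s * (a + d)))) / s
      = Real.log (1 + d / a) := by
  have had : 0 < a + d := by linarith
  have h1 : (1 : ℝ) + d / a = (a + d) / a := by field_simp
  -- Fubini swap for f t s = exp (-(s*t)) on Ioc a (a+d) × Ioi 0
  set μ := volume.restrict (Set.Ioc a (a + d)) with hμ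
  set ν := volume.restrict (Set.Ioi (0:ℝ)) with hν
  have hmeas : AEStronglyMeasurable (Function.uncurry fun t s => Real.exp (-(s * t)))
      (μ.prod ν) := by
    apply Continuous.aestronglyMeasurable
    exact (continuous_snd.mul continuous_fst).neg.rexp
  have hint : Integrable (Function.uncurry fun t s => Real.exp (-(s * t))) (μ.prod ν) := by
    rw [MeasureTheory.integrable_prod_iff hmeas]
    constructor
    · rw [hμ, ae_restrict_iff' measurableSet_Ioc]
      filter_upwards with t ht
      have ht0 : 0 < t := lt_trans ha ht.1
      have := exp_neg_integrableOn_Ioi 0 ht0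
      refine (?_ : IntegrableOn (fun y : ℝ => Real.exp (-(y * t))) (Set.Ioi 0))
      simpa [neg_mul, mul_comm] using this
    · rw [hμ]
      apply MeasureTheory.Integrable.mono' (g := fun _ : ℝ => a⁻¹)
        (integrable_const _)
      · apply AEStronglyMeasurable.integral_prod_right'
          (f := Function.uncurry fun t s => ‖Real.exp (-(s * t))‖)
        exact hmeas.norm
      · rw [ae_restrict_iff' measurableSet_Ioc]
        filter_upwards with t ht
        have ht0 : 0 < t := lt_trans ha ht.1
        simp only [Real.norm_eq_abs, Function.uncurry, abs_of_pos (Real.exp_pos _)]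
        rw [abs_of_nonneg (integral_nonneg fun s => (Real.exp_pos _).le)]
        rw [frullani_pointwise ht0]
        exact inv_anti₀ ha ht.1.le
  have hswap := MeasureTheory.integral_integral_swap hint
  -- evaluate both sides of hswap
  have hl : ∫ t, ∫ s, Real.exp (-(s * t)) ∂ν ∂μ = Real.log (1 + d / a) := by
    have : ∀ t ∈ Set.Ioc a (a + d), (∫ s, Real.exp (-(s * t)) ∂ν) = t⁻¹ := by
      intro t ht
      exact frullani_pointwise (lt_trans ha ht.1)
    rw [hμ, setIntegral_congr_fun measurableSet_Ioc this]
    rw [← intervalIntegral.integral_of_le (by linarith : a ≤ a + d)]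
    rw [integral_inv_of_pos ha had, h1]
  have hr : ∫ s, ∫ t, Real.exp (-(s * t)) ∂μ ∂ν
      = ∫ s in Set.Ioi (0:ℝ), (Real.exp (-(s * a)) - Real.exp (-(s * (a + d)))) / s := by
    rw [hν]
    apply setIntegral_congr_fun measurableSet_Ioi
    intro s hs
    rw [hμ]
    exact exp_integral_Ioc hs (by linarith)
  rw [hl, hr] at hswap
  exact hswap.symm

lemma frullani_integrableOn {a d : ℝ} (ha : 0 < a) (hd : 0 ≤ d) :
    IntegrableOn (fun s => (Real.exp (-(s * a)) - Real.exp (-(s * (a + d)))) / s)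
      (Set.Ioi (0:ℝ)) := by
  apply Integrable.mono' (g := fun s => d * Real.exp (-a * s))
    ((exp_neg_integrableOn_Ioi 0 ha).const_mul d)
  · exact (((measurable_id.mul measurable_const).neg.exp.sub
      (measurable_id.mul measurable_const).neg.exp).div measurable_id).aestronglyMeasurable
  · rw [ae_restrict_iff' measurableSet_Ioi]
    filter_upwards with s hs
    have hs0 : (0:ℝ) < s := hs
    have hkey : Real.exp (-(s * (a + d))) = Real.exp (-(s * a)) * Real.exp (-(s * d)) := by
      rw [← Real.exp_add]; ring_nf
    have h2 : 1 - Real.exp (-(s * d)) ≤ s * d := by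
      have := Real.add_one_le_exp (-(s * d)); linarith
    have h2' : 0 ≤ 1 - Real.exp (-(s * d)) := by
      have : Real.exp (-(s * d)) ≤ 1 := by
        rw [Real.exp_le_one_iff]
        nlinarith
      linarith
    have hnum : 0 ≤ Real.exp (-(s * a)) - Real.exp (-(s * (a + d))) := by
      rw [hkey]; nlinarith [Real.exp_pos (-(s * a))]
    rw [Real.norm_eq_abs, abs_of_nonneg (div_nonneg hnum hs0.le)]
    rw [div_le_iff₀ hs0, hkey]
    have : Real.exp (-(s * a)) * (1 - Real.exp (-(s * d))) ≤ Real.exp (-(s * a)) * (s * d) :=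
      mul_le_mul_of_nonneg_left h2 (Real.exp_pos _).le
    calc Real.exp (-(s * a)) - Real.exp (-(s * a)) * Real.exp (-(s * d))
        = Real.exp (-(s * a)) * (1 - Real.exp (-(s * d))) := by ring
      _ ≤ Real.exp (-(s * a)) * (s * d) := this
      _ = d * Real.exp (-a * s) * s := by rw [neg_mul, mul_comm a s]; ring
set_option maxHeartbeats 1000000 in
/-- Let `S, I₂` be nonnegative real random variables (possibly dependent), with `S`
integrable, and let `I₁` be a nonnegative real random variable independent of the pair
`(S, I₂)`.  Let `c > 0`.  Then
`E[ln(1 + S/(I₁ + I₂ + c))]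
   = ∫_0^∞ (e^(−s c)/s) E[e^(−s I₁)] (E[e^(−s I₂)] − E[e^(−s (I₂ + S))]) ds`. -/
theorem expected_log_rate_laplace
    {Ω : Type*} [MeasurableSpace Ω] (μ : Measure Ω) [IsProbabilityMeasure μ]
    (S I₁ I₂ : Ω → ℝ)
    (hS : Measurable S) (hI₁ : Measurable I₁) (hI₂ : Measurable I₂)
    (hSnn : ∀ ω, 0 ≤ S ω) (hI₁nn : ∀ ω, 0 ≤ I₁ ω) (hI₂nn : ∀ ω, 0 ≤ I₂ ω)
    (hSint : Integrable S μ)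
    (hindep : IndepFun I₁ (fun ω => (S ω, I₂ ω)) μ)
    (c : ℝ) (hc : 0 < c) :
    ∫ ω, Real.log (1 + S ω / (I₁ ω + I₂ ω + c)) ∂μ
      = ∫ s in Set.Ioi (0 : ℝ),
          Real.exp (-(s * c)) / s * (∫ ω, Real.exp (-(s * I₁ ω)) ∂μ) *
            ((∫ ω, Real.exp (-(s * I₂ ω)) ∂μ) - ∫ ω, Real.exp (-(s * (I₂ ω + S ω))) ∂μ) := by
  have hAm : Measurable fun ω => I₁ ω + I₂ ω + c := (hI₁.add hI₂).add measurable_const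
  have hApos : ∀ ω, 0 < I₁ ω + I₂ ω + c := fun ω => by
    have := hI₁nn ω; have := hI₂nn ω; linarith
  have hAc : ∀ ω, c ≤ I₁ ω + I₂ ω + c := fun ω => by
    have := hI₁nn ω; have := hI₂nn ω; linarith
  have hfr : ∀ ω, ∫ s in Set.Ioi (0:ℝ),
      (Real.exp (-(s * (I₁ ω + I₂ ω + c)))
        - Real.exp (-(s * (I₁ ω + I₂ ω + c + S ω)))) / s
      = Real.log (1 + S ω / (I₁ ω + I₂ ω + c)) :=
    fun ω => frullani_log (hApos ω) (hSnn ω)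
  have hFmeas : AEStronglyMeasurable
      (Function.uncurry fun (ω : Ω) (s : ℝ) =>
        (Real.exp (-(s * (I₁ ω + I₂ ω + c)))
          - Real.exp (-(s * (I₁ ω + I₂ ω + c + S ω)))) / s)
      (μ.prod (volume.restrict (Set.Ioi (0:ℝ)))) := by
    apply Measurable.aestronglyMeasurable
    exact (((measurable_snd.mul (hAm.comp measurable_fst)).neg.exp).sub
      ((measurable_snd.mul ((hAm.comp measurable_fst).add
        (hS.comp measurable_fst))).neg.exp)).div measurable_snd
  have hlogint : Integrable (fun ω => Real.log (1 + S ω / (I₁ ω + I₂ ω + c))) μ := by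
    apply Integrable.mono' (hSint.div_const c)
    · exact ((measurable_const.add (hS.div hAm)).log).aestronglyMeasurable
    · filter_upwards with ω
      have h1 : 0 ≤ S ω / (I₁ ω + I₂ ω + c) := div_nonneg (hSnn ω) (hApos ω).le
      have h2 : 0 ≤ Real.log (1 + S ω / (I₁ ω + I₂ ω + c)) :=
        Real.log_nonneg (by linarith)
      rw [Real.norm_eq_abs, abs_of_nonneg h2]
      have h3 : Real.log (1 + S ω / (I₁ ω + I₂ ω + c)) ≤ S ω / (I₁ ω + I₂ ω + c) := by
        have := Real.log_le_sub_one_of_pos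
          (show (0:ℝ) < 1 + S ω / (I₁ ω + I₂ ω + c) by linarith)
        linarith
      have h4 : S ω / (I₁ ω + I₂ ω + c) ≤ S ω / c :=
        div_le_div_of_nonneg_left (hSnn ω) hc (hAc ω)
      linarith
  have hnormint : ∀ ω, ∫ s in Set.Ioi (0:ℝ),
      ‖(Real.exp (-(s * (I₁ ω + I₂ ω + c)))
        - Real.exp (-(s * (I₁ ω + I₂ ω + c + S ω)))) / s‖
      = Real.log (1 + S ω / (I₁ ω + I₂ ω + c)) := by
    intro ω
    rw [← hfr ω]
    apply MeasureTheory.integral_congr_ae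
    filter_upwards [ae_restrict_mem measurableSet_Ioi] with s hs
    have hs0 : (0:ℝ) < s := hs
    have hnum : 0 ≤ Real.exp (-(s * (I₁ ω + I₂ ω + c)))
        - Real.exp (-(s * (I₁ ω + I₂ ω + c + S ω))) := by
      have : Real.exp (-(s * (I₁ ω + I₂ ω + c + S ω)))
          ≤ Real.exp (-(s * (I₁ ω + I₂ ω + c))) := by
        apply Real.exp_le_exp.mpr
        have := hSnn ω; nlinarith
      linarith
    simp only [Real.norm_eq_abs, abs_of_nonneg (div_nonneg hnum hs0.le)]
  have hFint : Integrable
      (Function.uncurry fun (ω : Ω) (s : ℝ) =>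
        (Real.exp (-(s * (I₁ ω + I₂ ω + c)))
          - Real.exp (-(s * (I₁ ω + I₂ ω + c + S ω)))) / s)
      (μ.prod (volume.restrict (Set.Ioi (0:ℝ)))) := by
    rw [MeasureTheory.integrable_prod_iff hFmeas]
    constructor
    · filter_upwards with ω
      simp only [Function.uncurry_apply_pair]
      exact frullani_integrableOn (hApos ω) (hSnn ω)
    · refine hlogint.congr (Filter.Eventually.of_forall fun ω => ?_)
      simp only [Function.uncurry_apply_pair]
      exact (hnormint ω).symm
  have hswap := MeasureTheory.integral_integral_swap hFint
  have hlhs : ∫ ω, Real.log (1 + S ω / (I₁ ω + I₂ ω + c)) ∂μ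
      = ∫ ω, (∫ s in Set.Ioi (0:ℝ),
          (Real.exp (-(s * (I₁ ω + I₂ ω + c)))
            - Real.exp (-(s * (I₁ ω + I₂ ω + c + S ω)))) / s) ∂μ := by
    apply MeasureTheory.integral_congr_ae
    filter_upwards with ω
    rw [hfr ω]
  rw [hlhs, hswap]
  apply setIntegral_congr_fun measurableSet_Ioi
  intro s hs
  have hs0 : (0:ℝ) < s := hs
  have hpt : ∀ ω : Ω, (Real.exp (-(s * (I₁ ω + I₂ ω + c)))
        - Real.exp (-(s * (I₁ ω + I₂ ω + c + S ω)))) / s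
      = Real.exp (-(s * c)) / s *
        (Real.exp (-(s * I₁ ω)) * Real.exp (-(s * I₂ ω))
          - Real.exp (-(s * I₁ ω)) * Real.exp (-(s * (I₂ ω + S ω)))) := by
    intro ω
    rw [show -(s * (I₁ ω + I₂ ω + c)) = -(s * c) + (-(s * I₁ ω) + -(s * I₂ ω)) by ring,
      show -(s * (I₁ ω + I₂ ω + c + S ω))
        = -(s * c) + (-(s * I₁ ω) + -(s * (I₂ ω + S ω))) by ring,
      Real.exp_add, Real.exp_add, Real.exp_add, Real.exp_add]
    ring
  have hXm : Measurable fun ω => Real.exp (-(s * I₁ ω)) :=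
    (measurable_const.mul hI₁).neg.exp
  have hYm : Measurable fun ω => Real.exp (-(s * I₂ ω)) :=
    (measurable_const.mul hI₂).neg.exp
  have hZm : Measurable fun ω => Real.exp (-(s * (I₂ ω + S ω))) :=
    (measurable_const.mul (hI₂.add hS)).neg.exp
  have hble : ∀ (f : Ω → ℝ), (∀ ω, 0 ≤ f ω) →
      ∀ ω, Real.exp (-(s * f ω)) ≤ 1 := by
    intro f hnn ω
    rw [Real.exp_le_one_iff]
    nlinarith [hnn ω]
  have hXYint : Integrable
      (fun ω => Real.exp (-(s * I₁ ω)) * Real.exp (-(s * I₂ ω))) μ := by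
    apply Integrable.mono' (integrable_const (1:ℝ)) (hXm.mul hYm).aestronglyMeasurable
    filter_upwards with ω
    simp only [Pi.mul_apply]
    rw [Real.norm_eq_abs, abs_of_nonneg (by positivity)]
    have := hble I₁ hI₁nn ω; have := hble I₂ hI₂nn ω
    nlinarith [Real.exp_pos (-(s * I₁ ω)), Real.exp_pos (-(s * I₂ ω))]
  have hXZint : Integrable
      (fun ω => Real.exp (-(s * I₁ ω)) * Real.exp (-(s * (I₂ ω + S ω)))) μ := by
    apply Integrable.mono' (integrable_const (1:ℝ)) (hXm.mul hZm).aestronglyMeasurable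
    filter_upwards with ω
    simp only [Pi.mul_apply]
    rw [Real.norm_eq_abs, abs_of_nonneg (by positivity)]
    have := hble I₁ hI₁nn ω
    have := hble (fun ω => I₂ ω + S ω) (fun ω => add_nonneg (hI₂nn ω) (hSnn ω)) ω
    nlinarith [Real.exp_pos (-(s * I₁ ω)), Real.exp_pos (-(s * (I₂ ω + S ω)))]
  have hindXY : IndepFun (fun ω => Real.exp (-(s * I₁ ω)))
      (fun ω => Real.exp (-(s * I₂ ω))) μ :=
    hindep.comp (φ := fun x : ℝ => Real.exp (-(s * x)))
      (ψ := fun p : ℝ × ℝ => Real.exp (-(s * p.2)))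
      (measurable_const.mul measurable_id).neg.exp
      (measurable_const.mul measurable_snd).neg.exp
  have hindXZ : IndepFun (fun ω => Real.exp (-(s * I₁ ω)))
      (fun ω => Real.exp (-(s * (I₂ ω + S ω)))) μ :=
    hindep.comp (φ := fun x : ℝ => Real.exp (-(s * x)))
      (ψ := fun p : ℝ × ℝ => Real.exp (-(s * (p.2 + p.1))))
      (measurable_const.mul measurable_id).neg.exp
      (measurable_const.mul (measurable_snd.add measurable_fst)).neg.exp
  have hmulXY := hindXY.integral_fun_mul_eq_mul_integral hXm.aestronglyMeasurable hYm.aestronglyMeasurable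
  have hmulXZ := hindXZ.integral_fun_mul_eq_mul_integral hXm.aestronglyMeasurable hZm.aestronglyMeasurable
  calc ∫ ω, (Real.exp (-(s * (I₁ ω + I₂ ω + c)))
        - Real.exp (-(s * (I₁ ω + I₂ ω + c + S ω)))) / s ∂μ
      = ∫ ω, Real.exp (-(s * c)) / s *
          (Real.exp (-(s * I₁ ω)) * Real.exp (-(s * I₂ ω))
            - Real.exp (-(s * I₁ ω)) * Real.exp (-(s * (I₂ ω + S ω)))) ∂μ :=
        MeasureTheory.integral_congr_ae (Filter.Eventually.of_forall hpt)
    _ = Real.exp (-(s * c)) / s *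
          ∫ ω, (Real.exp (-(s * I₁ ω)) * Real.exp (-(s * I₂ ω))
            - Real.exp (-(s * I₁ ω)) * Real.exp (-(s * (I₂ ω + S ω)))) ∂μ := by
        rw [integral_const_mul]
    _ = Real.exp (-(s * c)) / s *
          ((∫ ω, Real.exp (-(s * I₁ ω)) * Real.exp (-(s * I₂ ω)) ∂μ)
            - ∫ ω, Real.exp (-(s * I₁ ω)) * Real.exp (-(s * (I₂ ω + S ω))) ∂μ) := by
        rw [integral_sub hXYint hXZint]
    _ = Real.exp (-(s * c)) / s * (∫ ω, Real.exp (-(s * I₁ ω)) ∂μ) *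
          ((∫ ω, Real.exp (-(s * I₂ ω)) ∂μ)
            - ∫ ω, Real.exp (-(s * (I₂ ω + S ω))) ∂μ) := by
        rw [hmulXY, hmulXZ]; ring
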